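/- For every integer d ≥ 1, every ε ∈ (0,1) and every a ∈ [0, 1−ε], the iterated integral satisfies ∫_a^{1−ε} v^{1−d} ( ∫_0^v r^{d−1}/(1−r)² dr ) dv ≤ log(1/ε). -/

import Mathlib

open MeasureTheory intervalIntegral

lemma integral_inv_one_sub_sq_aux (v : ℝ) (hv : v < 1) :
    ∫ r in (0:ℝ)..v, ((1 - r) ^ 2)⁻¹ = (1 - v)⁻¹ - 1 := by
  have hne : ∀ r ∈ Set.uIcc (0:ℝ) v, 1 - r ≠ 0 := by
    intro r hr
    rcases Set.mem_uIcc.mp hr with h | h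
    · intro h'; nlinarith [h.1, h.2]
    · intro h'; nlinarith [h.1, h.2]
  have hderiv : ∀ r ∈ Set.uIcc (0:ℝ) v,
      HasDerivAt (fun x => (1 - x)⁻¹) (((1 - r) ^ 2)⁻¹) r := by
    intro r hr
    have h1 : HasDerivAt (fun x : ℝ => 1 - x) (-1) r := by
      simpa using (hasDerivAt_id r).const_sub (1:ℝ)
    have := h1.inv (hne r hr)
    convert this using 1
    all_goals first | rfl | field_simp
  have hint : IntervalIntegrable (fun r => ((1 - r) ^ 2)⁻¹) volume 0 v := by
    apply ContinuousOn.intervalIntegrable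
    apply ContinuousOn.inv₀ (by fun_prop)
    intro r hr
    exact pow_ne_zero 2 (hne r hr)
  rw [intervalIntegral.integral_eq_sub_of_hasDerivAt hderiv hint]
  simp

lemma integral_inv_one_sub_aux (a b : ℝ) (hab : a ≤ b) (hb : b < 1) :
    ∫ v in a..b, (1 - v)⁻¹ = Real.log (1 - a) - Real.log (1 - b) := by
  have hne : ∀ v ∈ Set.uIcc a b, 1 - v ≠ 0 := by
    intro v hv
    rw [Set.uIcc_of_le hab] at hv
    have : v < 1 := lt_of_le_of_lt hv.2 hb
    intro h; linarith
  have hderiv : ∀ v ∈ Set.uIcc a b,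
      HasDerivAt (fun x => -Real.log (1 - x)) ((1 - v)⁻¹) v := by
    intro v hv
    have h1 : HasDerivAt (fun x : ℝ => 1 - x) (-1) v := by
      simpa using (hasDerivAt_id v).const_sub (1:ℝ)
    have h2 := (Real.hasDerivAt_log (hne v hv)).comp v h1
    have := h2.neg
    convert this using 1
    all_goals first | rfl | field_simp
  have hint : IntervalIntegrable (fun v => (1 - v)⁻¹) volume a b := by
    apply ContinuousOn.intervalIntegrable
    apply ContinuousOn.inv₀ (by fun_prop)
    exact hne
  rw [intervalIntegral.integral_eq_sub_of_hasDerivAt hderiv hint]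
  ring

/-- The analytic core of the occupation-time bound: for every integer `d ≥ 1`,
`ε ∈ (0,1)` and `a ∈ [0, 1-ε]`,
`∫_a^{1-ε} v^{1-d} (∫_0^v r^{d-1}/(1-r)² dr) dv ≤ log(1/ε)`. -/
theorem iterated_integral_log_bound
    (d : ℕ) (hd : 1 ≤ d)
    (ε : ℝ) (hε0 : 0 < ε) (hε1 : ε < 1)
    (a : ℝ) (ha0 : 0 ≤ a) (ha1 : a ≤ 1 - ε) :
    (∫ v in a..(1 - ε), v ^ (1 - (d : ℤ)) * ∫ r in (0:ℝ)..v, r ^ (d - 1) / (1 - r) ^ 2)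
      ≤ Real.log (1 / ε) := by
  set b : ℝ := 1 - ε with hb
  have hb1 : b < 1 := by rw [hb]; linarith
  have hb0 : 0 ≤ b := le_trans ha0 ha1
  -- g is integrable on [a,b]
  have hgc : ContinuousOn (fun v : ℝ => (1 - v)⁻¹ - 1) (Set.Icc a b) := by
    apply ContinuousOn.sub _ continuousOn_const
    apply ContinuousOn.inv₀ (by fun_prop)
    intro v hv
    have : v < 1 := lt_of_le_of_lt hv.2 hb1
    intro h; linarith
  have hgint : IntervalIntegrable (fun v : ℝ => (1 - v)⁻¹ - 1) volume a b := by
    apply ContinuousOn.intervalIntegrable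
    rwa [Set.uIcc_of_le ha1]
  -- pointwise bound
  have hpt : ∀ v ∈ Set.Ioc a b,
      v ^ (1 - (d : ℤ)) * (∫ r in (0:ℝ)..v, r ^ (d - 1) / (1 - r) ^ 2)
        ≤ (1 - v)⁻¹ - 1 := by
    intro v hv
    have hv0 : 0 < v := lt_of_le_of_lt ha0 hv.1
    have hv1 : v < 1 := lt_of_le_of_lt hv.2 hb1
    have hrne : ∀ r ∈ Set.uIcc (0:ℝ) v, (1 - r) ^ 2 ≠ 0 := by
      intro r hr
      rw [Set.uIcc_of_le hv0.le] at hr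
      have : r < 1 := lt_of_le_of_lt hr.2 hv1
      exact pow_ne_zero 2 (by intro h; linarith)
    have hint1 : IntervalIntegrable (fun r => r ^ (d - 1) / (1 - r) ^ 2) volume 0 v := by
      apply ContinuousOn.intervalIntegrable
      exact ContinuousOn.div (by fun_prop) (by fun_prop) hrne
    have hint2 : IntervalIntegrable (fun r => v ^ (d - 1) / (1 - r) ^ 2) volume 0 v := by
      apply ContinuousOn.intervalIntegrable
      exact ContinuousOn.div (by fun_prop) (by fun_prop) hrne
    have hmono : (∫ r in (0:ℝ)..v, r ^ (d - 1) / (1 - r) ^ 2)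
        ≤ ∫ r in (0:ℝ)..v, v ^ (d - 1) / (1 - r) ^ 2 := by
      apply intervalIntegral.integral_mono_on hv0.le hint1 hint2
      intro r hr
      have hr1 : r < 1 := lt_of_le_of_lt hr.2 hv1
      gcongr <;> nlinarith [hr.1, hr.2]
    have hconst : (∫ r in (0:ℝ)..v, v ^ (d - 1) / (1 - r) ^ 2)
        = v ^ (d - 1) * ((1 - v)⁻¹ - 1) := by
      simp_rw [div_eq_mul_inv]
      rw [intervalIntegral.integral_const_mul, integral_inv_one_sub_sq_aux v hv1]
    have hzpow : v ^ (1 - (d : ℤ)) * (v : ℝ) ^ (d - 1) = 1 := by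
      have : (v : ℝ) ^ (d - 1) = v ^ ((d : ℤ) - 1) := by
        rw [← zpow_natCast]
        congr 1
        omega
      rw [this, ← zpow_add₀ (ne_of_gt hv0)]
      norm_num
    calc v ^ (1 - (d : ℤ)) * (∫ r in (0:ℝ)..v, r ^ (d - 1) / (1 - r) ^ 2)
        ≤ v ^ (1 - (d : ℤ)) * (v ^ (d - 1) * ((1 - v)⁻¹ - 1)) := by
          rw [← hconst]
          exact mul_le_mul_of_nonneg_left hmono (zpow_nonneg hv0.le _)
      _ = (1 - v)⁻¹ - 1 := by rw [← mul_assoc, hzpow, one_mul]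
  -- nonnegativity of f
  have hf0 : ∀ v ∈ Set.Ioc a b,
      0 ≤ v ^ (1 - (d : ℤ)) * ∫ r in (0:ℝ)..v, r ^ (d - 1) / (1 - r) ^ 2 := by
    intro v hv
    have hv0 : 0 < v := lt_of_le_of_lt ha0 hv.1
    apply mul_nonneg (zpow_nonneg hv0.le _)
    apply intervalIntegral.integral_nonneg hv0.le
    intro r hr
    exact div_nonneg (pow_nonneg hr.1 _) (sq_nonneg _)
  -- main comparison
  have key : (∫ v in a..b, v ^ (1 - (d : ℤ)) * ∫ r in (0:ℝ)..v, r ^ (d - 1) / (1 - r) ^ 2)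
      ≤ ∫ v in a..b, ((1 - v)⁻¹ - 1) := by
    rw [intervalIntegral.integral_of_le ha1, intervalIntegral.integral_of_le ha1]
    apply MeasureTheory.integral_mono_of_nonneg
    · exact (ae_restrict_iff' measurableSet_Ioc).2 (Filter.Eventually.of_forall hf0)
    · exact hgint.1
    · exact (ae_restrict_iff' measurableSet_Ioc).2 (Filter.Eventually.of_forall hpt)
  -- compute the right-hand side
  have hone : IntervalIntegrable (fun _ : ℝ => (1:ℝ)) volume a b :=
    intervalIntegrable_const
  have hinv : IntervalIntegrable (fun v : ℝ => (1 - v)⁻¹) volume a b := by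
    simpa using hgint.add hone
  have hcalc : (∫ v in a..b, ((1 - v)⁻¹ - 1))
      = Real.log (1 - a) - Real.log ε - (b - a) := by
    rw [intervalIntegral.integral_sub hinv hone, integral_inv_one_sub_aux a b ha1 hb1]
    have : (1 : ℝ) - b = ε := by rw [hb]; ring
    rw [this]
    simp
  have hlog : Real.log (1 - a) ≤ 0 := by
    apply Real.log_nonpos <;> linarith
  have hba : 0 ≤ b - a := by linarith
  rw [one_div, Real.log_inv]
  calc (∫ v in a..b, v ^ (1 - (d : ℤ)) * ∫ r in (0:ℝ)..v, r ^ (d - 1) / (1 - r) ^ 2)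
      ≤ Real.log (1 - a) - Real.log ε - (b - a) := by rw [← hcalc]; exact key
    _ ≤ -Real.log ε := by linarith
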